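/- For every oriented word u of rank k ≥ 2 and every reduced word g of rank k, τ_u(g) + τ_{u^{-1}}(g^s) = 0, where g^s denotes the case switch of g (each letter replaced by its inverse) and u^{-1} is the inverse word of u. -/

import Mathlib

open FreeGroup

/-- A letter over the alphabet `{a_1,...,a_k, a_1⁻¹,...,a_k⁻¹}`:
`(i, true)` is the positive letter `a_i`, `(i, false)` is `a_i⁻¹`. -/
abbrev Letter (k : ℕ) := Fin k × Bool

/-- Formal inverse of a letter. -/
def invL {k : ℕ} (x : Letter k) : Letter k := (x.1, !x.2)

/-- An oriented word of rank `k`: each of the `2k` letters appears exactly once. -/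
def IsOriented {k : ℕ} (u : List (Letter k)) : Prop :=
  u.Nodup ∧ ∀ x : Letter k, x ∈ u

/-- `x` occurs to the left of `y` in `u`. -/
def leftOf {k : ℕ} (u : List (Letter k)) (x y : Letter k) : Prop :=
  u.idxOf x < u.idxOf y

instance {k : ℕ} (u : List (Letter k)) (x y : Letter k) : Decidable (leftOf u x y) :=
  inferInstanceAs (Decidable (_ < _))

/-- Number of occurrences of the two-letter word `xy` as a contiguous subword of `L`. -/
def cnt {k : ℕ} (L : List (Letter k)) (x y : Letter k) : ℕ :=
  (L.zip L.tail).count (x, y)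

/-- The case transition weight `α_u`, on a reduced word `L`. -/
noncomputable def alphaW {k : ℕ} (u L : List (Letter k)) : ℝ :=
  (∑ a : Fin k, ∑ b : Fin k,
      if leftOf u (a, false) (b, false) then (cnt L (a, true) (b, false) : ℝ) else 0)
  - ∑ a : Fin k, ∑ b : Fin k,
      if leftOf u (a, true) (b, true) then (cnt L (b, false) (a, true) : ℝ) else 0

/-- The letter transition weight `β_u`, on a reduced word `L`. -/
noncomputable def betaW {k : ℕ} (u L : List (Letter k)) : ℝ :=
  (∑ a : Fin k, ∑ b : Fin k,
      if leftOf u (a, false) (b, true) then (cnt L (a, true) (b, true) : ℝ) else 0)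
  - ∑ a : Fin k, ∑ b : Fin k,
      if leftOf u (a, false) (b, true) then (cnt L (b, false) (a, false) : ℝ) else 0

/-- The last letter weight `ω`, on a reduced word `L`. -/
noncomputable def omegaW {k : ℕ} (L : List (Letter k)) : ℝ :=
  match L.getLast? with
  | none => 0
  | some x => if x.2 then 1 / 2 else -(1 / 2)

/-- The weight `τ_u` induced by an oriented word `u`, evaluated on the reduced form. -/
noncomputable def tau {k : ℕ} (u : List (Letter k)) (g : FreeGroup (Fin k)) : ℝ :=
  alphaW u g.toWord + betaW u g.toWord + omegaW g.toWord

/-- The weight contribution `wtc_u` of a reduced two-letter word `xy`. -/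
noncomputable def wtc {k : ℕ} (u : List (Letter k)) (x y : Letter k) : ℝ :=
  if x.2 then (if leftOf u (x.1, false) y then 1 else 0)
  else (if leftOf u y (x.1, true) then -1 else 0)

/-- The inverse word of `u`. -/
def invWord {k : ℕ} (u : List (Letter k)) : List (Letter k) := (u.map invL).reverse

/-- A function `τ : G → ℝ` with small relative defect. -/
def SmallRelDefect {G : Type*} [Group G] (τ : G → ℝ) : Prop :=
  τ 1 = 0 ∧ ∀ g h : G, (g ≠ 1 ∨ h ≠ 1) → |τ g + τ h - τ (g * h)| < |τ g| + |τ h|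

section Aux

variable {k : ℕ}

lemma invL_invL (x : Letter k) : invL (invL x) = x := by
  simp [invL]

lemma invL_injective : Function.Injective (invL (k := k)) :=
  Function.LeftInverse.injective invL_invL

lemma count_map_inj {α β : Type*} [BEq α] [LawfulBEq α] [BEq β] [LawfulBEq β]
    {f : α → β} (hf : Function.Injective f) (l : List α) (x : α) :
    (l.map f).count (f x) = l.count x := by
  induction l with
  | nil => rfl
  | cons a t ih =>
    by_cases h : a = x
    · subst h; simp [List.count_cons, ih]
    · rw [List.map_cons, List.count_cons, List.count_cons, ih]
      have h1 : (f a == f x) = false := by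
        simp only [beq_eq_false_iff_ne, ne_eq]
        exact fun hc => h (hf hc)
      have h2 : (a == x) = false := by simpa using h
      rw [h1, h2]

lemma idxOf_map_inj {α β : Type*} [BEq α] [LawfulBEq α] [BEq β] [LawfulBEq β]
    {f : α → β} (hf : Function.Injective f) (l : List α) (x : α) :
    (l.map f).idxOf (f x) = l.idxOf x := by
  induction l with
  | nil => rfl
  | cons a t ih =>
    by_cases h : a = x
    · subst h; simp [List.idxOf_cons]
    · rw [List.map_cons, List.idxOf_cons, List.idxOf_cons, ih]
      have h1 : (f a == f x) = false := by
        simp only [beq_eq_false_iff_ne, ne_eq]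
        exact fun hc => h (hf hc)
      have h2 : (a == x) = false := by simpa using h
      rw [h1, h2]

lemma idxOf_of_not_mem' {α : Type*} [BEq α] [LawfulBEq α] {l : List α} {x : α}
    (h : x ∉ l) : l.idxOf x = l.length := by
  induction l with
  | nil => rfl
  | cons a t ih =>
    have ha : (a == x) = false := by
      simp only [beq_eq_false_iff_ne, ne_eq]
      exact fun hc => h (hc ▸ (List.mem_cons_self (a := a) (l := t)))
    rw [List.idxOf_cons, ha, Bool.cond_eq_ite, if_neg (by simp),
      ih (fun hc => h (List.mem_cons_of_mem a hc)), List.length_cons]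

lemma idxOf_lt_length' {α : Type*} [BEq α] [LawfulBEq α] {l : List α} {x : α}
    (h : x ∈ l) : l.idxOf x < l.length := by
  induction l with
  | nil => simp at h
  | cons a t ih =>
    rw [List.idxOf_cons, Bool.cond_eq_ite]
    by_cases hax : (a == x) = true
    · rw [if_pos hax]; simp
    · rw [if_neg hax, List.length_cons]
      have hx : x ∈ t := by
        rcases List.mem_cons.mp h with h' | h'
        · exact absurd (by simp [h']) hax
        · exact h'
      exact Nat.succ_lt_succ (ih hx)

lemma idxOf_append_left' {α : Type*} [BEq α] [LawfulBEq α] {l₁ : List α} (l₂ : List α)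
    {x : α} (h : x ∈ l₁) : (l₁ ++ l₂).idxOf x = l₁.idxOf x := by
  induction l₁ with
  | nil => simp at h
  | cons a t ih =>
    rw [List.cons_append, List.idxOf_cons, List.idxOf_cons, Bool.cond_eq_ite,
      Bool.cond_eq_ite]
    by_cases hax : (a == x) = true
    · rw [if_pos hax, if_pos hax]
    · have hx : x ∈ t := by
        rcases List.mem_cons.mp h with h' | h'
        · exact absurd (by simp [h']) hax
        · exact h'
      rw [if_neg hax, if_neg hax, ih hx]

lemma idxOf_append_right' {α : Type*} [BEq α] [LawfulBEq α] {l₁ : List α} (l₂ : List α)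
    {x : α} (h : x ∉ l₁) : (l₁ ++ l₂).idxOf x = l₁.length + l₂.idxOf x := by
  induction l₁ with
  | nil => simp
  | cons a t ih =>
    have ha : (a == x) = false := by
      simp only [beq_eq_false_iff_ne, ne_eq]
      exact fun hc => h (hc ▸ (List.mem_cons_self (a := a) (l := t)))
    rw [List.cons_append, List.idxOf_cons, ha, Bool.cond_eq_ite, if_neg (by simp),
      ih (fun hc => h (List.mem_cons_of_mem a hc)), List.length_cons]
    omega

lemma idxOf_reverse' {α : Type*} [BEq α] [LawfulBEq α] {l : List α} (hl : l.Nodup)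
    {x : α} (hx : x ∈ l) : l.reverse.idxOf x = l.length - 1 - l.idxOf x := by
  induction l with
  | nil => simp at hx
  | cons a t ih =>
    rw [List.reverse_cons]
    rcases List.mem_cons.mp hx with h | h
    · subst h
      have hx' : x ∉ t.reverse := by simpa using (List.nodup_cons.mp hl).1
      rw [idxOf_append_right' _ hx']
      simp [List.idxOf_cons]
    · have hax : (a == x) = false := by
        simp only [beq_eq_false_iff_ne, ne_eq]
        exact fun hc => (List.nodup_cons.mp hl).1 (hc ▸ h)
      rw [idxOf_append_left' _ (by simpa using h), ih (List.nodup_cons.mp hl).2 h,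
        List.idxOf_cons, hax, Bool.cond_eq_ite, if_neg (by simp)]
      have := idxOf_lt_length' h
      simp only [List.length_cons, List.length_reverse]
      omega

lemma leftOf_invWord {u : List (Letter k)} (hu : IsOriented u) (p q : Letter k) :
    leftOf (invWord u) p q ↔ leftOf u (invL q) (invL p) := by
  obtain ⟨hnd, hall⟩ := hu
  have hnd' : (u.map invL).Nodup := hnd.map invL_injective
  have hidx : ∀ x : Letter k, (invWord u).idxOf x = u.length - 1 - u.idxOf (invL x) := by
    intro x
    have hx : x ∈ u.map invL := List.mem_map.mpr ⟨invL x, hall _, invL_invL x⟩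
    have hmi := idxOf_map_inj invL_injective u (invL x)
    rw [invL_invL] at hmi
    rw [invWord, idxOf_reverse' hnd' hx, hmi, List.length_map]
  rw [leftOf, leftOf, hidx, hidx]
  have h1 := idxOf_lt_length' (hall (invL p))
  have h2 := idxOf_lt_length' (hall (invL q))
  omega

lemma cnt_map_invL (L : List (Letter k)) (x y : Letter k) :
    cnt (L.map invL) (invL x) (invL y) = cnt L x y := by
  unfold cnt
  rw [← List.map_tail, List.zip_map]
  have hinj : Function.Injective (Prod.map (invL (k := k)) (invL (k := k))) := by
    intro a b hab
    cases a; cases b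
    simp only [Prod.map, Prod.mk.injEq] at hab ⊢
    exact ⟨invL_injective hab.1, invL_injective hab.2⟩
  exact count_map_inj hinj (L.zip L.tail) (x, y)

lemma alphaW_inv {u : List (Letter k)} (hu : IsOriented u) (L : List (Letter k)) :
    alphaW (invWord u) (L.map invL) = - alphaW u L := by
  unfold alphaW
  have hP : (∑ a : Fin k, ∑ b : Fin k,
      if leftOf (invWord u) (a, false) (b, false)
        then (cnt (L.map invL) (a, true) (b, false) : ℝ) else 0)
      = ∑ a : Fin k, ∑ b : Fin k,
      if leftOf u (a, true) (b, true) then (cnt L (b, false) (a, true) : ℝ) else 0 := by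
    rw [Finset.sum_comm]
    refine Finset.sum_congr rfl fun a _ => Finset.sum_congr rfl fun b _ => ?_
    exact if_congr (leftOf_invWord hu _ _)
      (Nat.cast_inj.mpr (cnt_map_invL L (b, false) (a, true))) rfl
  have hN : (∑ a : Fin k, ∑ b : Fin k,
      if leftOf (invWord u) (a, true) (b, true)
        then (cnt (L.map invL) (b, false) (a, true) : ℝ) else 0)
      = ∑ a : Fin k, ∑ b : Fin k,
      if leftOf u (a, false) (b, false) then (cnt L (a, true) (b, false) : ℝ) else 0 := by
    rw [Finset.sum_comm]
    refine Finset.sum_congr rfl fun a _ => Finset.sum_congr rfl fun b _ => ?_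
    exact if_congr (leftOf_invWord hu _ _)
      (Nat.cast_inj.mpr (cnt_map_invL L (a, true) (b, false))) rfl
  rw [hP, hN]; ring

lemma betaW_inv {u : List (Letter k)} (hu : IsOriented u) (L : List (Letter k)) :
    betaW (invWord u) (L.map invL) = - betaW u L := by
  unfold betaW
  have hP : (∑ a : Fin k, ∑ b : Fin k,
      if leftOf (invWord u) (a, false) (b, true)
        then (cnt (L.map invL) (a, true) (b, true) : ℝ) else 0)
      = ∑ a : Fin k, ∑ b : Fin k,
      if leftOf u (a, false) (b, true) then (cnt L (b, false) (a, false) : ℝ) else 0 := by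
    rw [Finset.sum_comm]
    refine Finset.sum_congr rfl fun a _ => Finset.sum_congr rfl fun b _ => ?_
    exact if_congr (leftOf_invWord hu _ _)
      (Nat.cast_inj.mpr (cnt_map_invL L (b, false) (a, false))) rfl
  have hN : (∑ a : Fin k, ∑ b : Fin k,
      if leftOf (invWord u) (a, false) (b, true)
        then (cnt (L.map invL) (b, false) (a, false) : ℝ) else 0)
      = ∑ a : Fin k, ∑ b : Fin k,
      if leftOf u (a, false) (b, true) then (cnt L (a, true) (b, true) : ℝ) else 0 := by
    rw [Finset.sum_comm]
    refine Finset.sum_congr rfl fun a _ => Finset.sum_congr rfl fun b _ => ?_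
    exact if_congr (leftOf_invWord hu _ _)
      (Nat.cast_inj.mpr (cnt_map_invL L (a, true) (b, true))) rfl
  rw [hP, hN]; ring

lemma omegaW_inv (L : List (Letter k)) : omegaW (L.map invL) = - omegaW L := by
  unfold omegaW
  rw [List.getLast?_map]
  cases h : L.getLast? with
  | none => simp
  | some x => cases hx : x.2 <;> simp [invL, hx]

lemma reduce_map_invL (L : List (Letter k)) :
    FreeGroup.reduce (L.map invL) = (FreeGroup.reduce L).map invL := by
  induction L with
  | nil => rfl
  | cons x t ih =>
    rw [List.map_cons, FreeGroup.reduce.cons, FreeGroup.reduce.cons, ih]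
    cases h : FreeGroup.reduce t with
    | nil => rfl
    | cons hd tl =>
      simp only [List.map_cons]
      by_cases hc : x.1 = hd.1 ∧ x.2 = !hd.2
      · rw [if_pos hc, if_pos]
        exact ⟨hc.1, by simp [invL, hc.2]⟩
      · have hneg : ¬((invL x).1 = (invL hd).1 ∧ (invL x).2 = !(invL hd).2) := by
          rintro ⟨h1, h2⟩
          apply hc
          refine ⟨h1, ?_⟩
          cases hx2 : x.2 <;> cases hh2 : hd.2 <;> simp_all [invL]
        rw [if_neg hc, if_neg hneg, List.map_cons, List.map_cons]

end Aux

theorem stmt12 {k : ℕ} (hk : 2 ≤ k) (u : List (Letter k)) (hu : IsOriented u)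
    (g : FreeGroup (Fin k)) :
    tau u g + tau (invWord u) (FreeGroup.mk (g.toWord.map invL)) = 0 := by
  have hw : (FreeGroup.mk (g.toWord.map invL)).toWord = g.toWord.map invL := by
    rw [FreeGroup.toWord_mk, reduce_map_invL, FreeGroup.reduce_toWord]
  unfold tau
  rw [hw, alphaW_inv hu, betaW_inv hu, omegaW_inv]
  ring
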